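/- arXiv:2512.02573 — 2 statements merged into one kernel-verified Lean document; each statement's English description precedes it below -/
import Mathlib

section
/- Let M = 2L and suppose each 2×K block W_ℓ satisfies H_ℓ·G_ℓ(W_ℓ)·W_ℓ = diag(γ_{1,ℓ},...,γ_{K,ℓ}) with γ_{k,ℓ} ≠ 0. Define new blocks W'_ℓ = W_ℓ·diag(e^{-i arg γ_{1,ℓ}},...,e^{-i arg γ_{K,ℓ}}). Then the stacked matrix W' with row blocks W'_ℓ satisfies H·G(W')·W' = diag(Σ_ℓ |γ_{1,ℓ}|, ..., Σ_ℓ |γ_{K,ℓ}|), i.e., the per-block diagonal gains combine in phase to real positive values. -/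
open Complex Matrix

def pairIdx {L : ℕ} (ℓ : Fin L) (j : Fin 2) : Fin (2 * L) :=
  ⟨2 * ℓ.val + j.val, by omega⟩

/-- The pair (block) that the antenna `m` belongs to. -/
def blkOf {L : ℕ} (m : Fin (2 * L)) : Fin L :=
  ⟨m.val / 2, by omega⟩

/-- Bussgang gain matrix: diagonal with entries α_m + β_m · ‖m-th row of W‖². -/
noncomputable def bussgangGain {M K : ℕ} (α β : Fin M → ℂ)
    (W : Matrix (Fin M) (Fin K) ℂ) : Matrix (Fin M) (Fin M) ℂ :=
  Matrix.diagonal (fun m => α m + β m * (∑ k, Complex.normSq (W m k) : ℝ))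

lemma key (z : ℂ) : z * Complex.exp (-(Complex.arg z) * Complex.I) = (‖z‖ : ℂ) := by
  conv_lhs => rw [← Complex.norm_mul_exp_arg_mul_I z]
  rw [mul_assoc, ← Complex.exp_add]
  norm_num

lemma nsq (z : ℂ) (r : ℝ) :
    Complex.normSq (z * Complex.exp (-(r : ℂ) * Complex.I)) = Complex.normSq z := by
  have h1 : Complex.normSq (Complex.exp (((-r : ℝ) : ℂ) * Complex.I)) = 1 := by
    rw [← Complex.sq_norm, Complex.norm_exp_ofReal_mul_I]; norm_num
  rw [Complex.normSq_mul,
    show (-(r : ℂ)) * Complex.I = ((-r : ℝ) : ℂ) * Complex.I by push_cast; ring,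
    h1, mul_one]

def pairEquiv (L : ℕ) : Fin L × Fin 2 ≃ Fin (2 * L) where
  toFun p := ⟨2 * p.1.val + p.2.val, by omega⟩
  invFun m := (⟨m.val / 2, by omega⟩, ⟨m.val % 2, by omega⟩)
  left_inv p := by
    rcases p with ⟨⟨a, ha⟩, ⟨b, hb⟩⟩
    simp only [Prod.mk.injEq, Fin.mk.injEq]
    omega
  right_inv m := by
    rcases m with ⟨v, hv⟩
    simp only [Fin.mk.injEq]
    omega

lemma blk_pair {L : ℕ} (ℓ : Fin L) (j : Fin 2) : blkOf (pairIdx ℓ j) = ℓ := by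
  rcases ℓ with ⟨a, ha⟩; rcases j with ⟨b, hb⟩
  simp only [pairIdx, blkOf, Fin.mk.injEq]
  omega


theorem stmt_5 (K L : ℕ) (α β : Fin (2 * L) → ℂ)
    (H : Matrix (Fin K) (Fin (2 * L)) ℂ) (W : Matrix (Fin (2 * L)) (Fin K) ℂ)
    (γ : Fin K → Fin L → ℂ) (hγ : ∀ k ℓ, γ k ℓ ≠ 0)
    (hblk : ∀ ℓ : Fin L,
      (Matrix.of fun k j => H k (pairIdx ℓ j))
          * bussgangGain (fun j => α (pairIdx ℓ j)) (fun j => β (pairIdx ℓ j))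
              (Matrix.of fun j k => W (pairIdx ℓ j) k)
          * (Matrix.of fun j k => W (pairIdx ℓ j) k)
        = Matrix.diagonal (fun k => γ k ℓ)) :
    H * bussgangGain α β
          (Matrix.of fun m k => W m k * Complex.exp (-(Complex.arg (γ k (blkOf m))) * Complex.I))
        * (Matrix.of fun m k => W m k * Complex.exp (-(Complex.arg (γ k (blkOf m))) * Complex.I))
      = Matrix.diagonal (fun k => ((∑ ℓ, ‖γ k ℓ‖ : ℝ) : ℂ)) := by
  ext k k'
  -- the gain is invariant under the phase rotation
  have hg : ∀ m : Fin (2 * L),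
      (∑ t, Complex.normSq (W m t * Complex.exp (-(Complex.arg (γ t (blkOf m))) * Complex.I)) : ℝ)
        = (∑ t, Complex.normSq (W m t) : ℝ) := by
    intro m
    exact Finset.sum_congr rfl fun t _ => nsq (W m t) (Complex.arg (γ t (blkOf m)))
  -- per-block identity, entrywise
  have hE : ∀ ℓ : Fin L,
      ∑ j : Fin 2, H k (pairIdx ℓ j)
          * ((α (pairIdx ℓ j) + β (pairIdx ℓ j)
              * (∑ t, Complex.normSq (W (pairIdx ℓ j) t) : ℝ))
            * W (pairIdx ℓ j) k')
        = Matrix.diagonal (fun k => γ k ℓ) k k' := by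
    intro ℓ
    have := congrFun (congrFun (hblk ℓ) k) k'
    simpa [bussgangGain, Matrix.mul_apply, Matrix.mul_diagonal, Matrix.diagonal_apply,
      mul_assoc] using this
  rw [Matrix.mul_apply]
  simp only [bussgangGain, Matrix.mul_diagonal, Matrix.of_apply, hg]
  rw [← (pairEquiv L).sum_comp
      (fun m => H k m * (α m + β m * (∑ t, Complex.normSq (W m t) : ℝ))
        * (W m k' * Complex.exp (-(Complex.arg (γ k' (blkOf m))) * Complex.I)))]
  rw [Fintype.sum_prod_type]
  have hpe : ∀ (ℓ : Fin L) (j : Fin 2), pairEquiv L (ℓ, j) = pairIdx ℓ j := fun _ _ => rfl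
  simp only [hpe, blk_pair]
  have : ∀ ℓ : Fin L,
      ∑ j : Fin 2, H k (pairIdx ℓ j)
          * (α (pairIdx ℓ j) + β (pairIdx ℓ j)
              * (∑ t, Complex.normSq (W (pairIdx ℓ j) t) : ℝ))
          * (W (pairIdx ℓ j) k' * Complex.exp (-(Complex.arg (γ k' ℓ)) * Complex.I))
        = Matrix.diagonal (fun k => γ k ℓ) k k'
            * Complex.exp (-(Complex.arg (γ k' ℓ)) * Complex.I) := by
    intro ℓ
    rw [← hE ℓ, Finset.sum_mul]
    exact Finset.sum_congr rfl fun j _ => by ring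
  simp only [this]
  by_cases hkk : k = k'
  · subst hkk
    simp only [Matrix.diagonal_apply_eq, key]
    push_cast
    rfl
  · simp [Matrix.diagonal_apply_ne _ hkk, hkk]
end

section
/- In the 2×2 case, suppose the amplitudes |w_{mk}| ≥ 0 (with |w_{11}|, |w_{12}| > 0) satisfy the unimodularity conditions |h_{22}| · |α_2 + β_2(|w_{21}|² + |w_{22}|²)| · |w_{21}| = |h_{21}| · |α_1 + β_1(|w_{11}|² + |w_{12}|²)| · |w_{11}| and |h_{12}| · |α_2 + β_2(|w_{21}|² + |w_{22}|²)| · |w_{22}| = |h_{11}| · |α_1 + β_1(|w_{11}|² + |w_{12}|²)| · |w_{12}|, where all h_{km} ≠ 0 and the gain factors α_m + β_m(·) are nonzero. Then there exist phases φ_{mk} ∈ ℝ such that the matrix W with entries w_{mk} = |w_{mk}| e^{iφ_{mk}} satisfies H·G(W)·W = diag(γ_1, γ_2) for some γ_1, γ_2 ∈ ℂ, i.e., the off-diagonal interference terms vanish exactly. -/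
open Complex Matrix

lemma normSq_amp (r θ : ℝ) :
    Complex.normSq ((r : ℂ) * Complex.exp (θ * Complex.I)) = r ^ 2 := by
  rw [Complex.normSq_mul, ← Complex.sq_norm (Complex.exp _), Complex.norm_exp_ofReal_mul_I]
  simp [Complex.normSq_ofReal, sq]

theorem stmt_7 (α β : Fin 2 → ℂ) (H : Matrix (Fin 2) (Fin 2) ℂ)
    (ρ : Fin 2 → Fin 2 → ℝ)  -- amplitudes: ρ m k = |w_{(m+1)(k+1)}|
    (hρ : ∀ m k, 0 ≤ ρ m k) (hρ11 : 0 < ρ 0 0) (hρ12 : 0 < ρ 0 1)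
    (hH : ∀ k m, H k m ≠ 0)
    -- the gain factors
    (g₁ g₂ : ℂ)
    (hg₁ : g₁ = α 0 + β 0 * (((ρ 0 0) ^ 2 + (ρ 0 1) ^ 2 : ℝ) : ℂ))
    (hg₂ : g₂ = α 1 + β 1 * (((ρ 1 0) ^ 2 + (ρ 1 1) ^ 2 : ℝ) : ℂ))
    (hg₁0 : g₁ ≠ 0) (hg₂0 : g₂ ≠ 0)
    -- unimodularity conditions
    (hr₁ : ‖H 1 1‖ * ‖g₂‖ * ρ 1 0
            = ‖H 1 0‖ * ‖g₁‖ * ρ 0 0)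
    (hr₂ : ‖H 0 1‖ * ‖g₂‖ * ρ 1 1
            = ‖H 0 0‖ * ‖g₁‖ * ρ 0 1) :
    ∃ (φ : Fin 2 → Fin 2 → ℝ) (γ₁ γ₂ : ℂ),
      H * bussgangGain α β
            (Matrix.of fun m k => (ρ m k : ℂ) * Complex.exp (φ m k * Complex.I))
          * (Matrix.of fun m k => (ρ m k : ℂ) * Complex.exp (φ m k * Complex.I))
        = Matrix.diagonal ![γ₁, γ₂] := by
  set c₁ : ℂ := -(H 1 0 * g₁ * (ρ 0 0 : ℝ)) / (H 1 1 * g₂) with hc₁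
  set c₂ : ℂ := -(H 0 0 * g₁ * (ρ 0 1 : ℝ)) / (H 0 1 * g₂) with hc₂
  have hden₁ : ‖H 1 1‖ * ‖g₂‖ ≠ 0 := by simp [hH, hg₂0]
  have hden₂ : ‖H 0 1‖ * ‖g₂‖ ≠ 0 := by simp [hH, hg₂0]
  have habs₁ : ‖c₁‖ = ρ 1 0 := by
    rw [hc₁, norm_div, norm_neg, norm_mul, norm_mul, norm_mul,
      Complex.norm_real, Real.norm_of_nonneg (hρ 0 0), ← hr₁]
    field_simp [hH 1 1]
  have habs₂ : ‖c₂‖ = ρ 1 1 := by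
    rw [hc₂, norm_div, norm_neg, norm_mul, norm_mul, norm_mul,
      Complex.norm_real, Real.norm_of_nonneg (hρ 0 1), ← hr₂]
    field_simp [hH 0 1]
  have hkey₁ : (ρ 1 0 : ℂ) * Complex.exp (c₁.arg * Complex.I) = c₁ := by
    rw [← habs₁]; exact Complex.norm_mul_exp_arg_mul_I c₁
  have hkey₂ : (ρ 1 1 : ℂ) * Complex.exp (c₂.arg * Complex.I) = c₂ := by
    rw [← habs₂]; exact Complex.norm_mul_exp_arg_mul_I c₂
  have hne₁ : H 1 1 * g₂ ≠ 0 := mul_ne_zero (hH 1 1) hg₂0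
  have hne₂ : H 0 1 * g₂ ≠ 0 := mul_ne_zero (hH 0 1) hg₂0
  have hg₁' : α 0 + β 0 * ((ρ 0 0 : ℂ) ^ 2 + (ρ 0 1 : ℂ) ^ 2) = g₁ := by
    rw [hg₁]; push_cast; ring
  have hg₂' : α 1 + β 1 * ((ρ 1 0 : ℂ) ^ 2 + (ρ 1 1 : ℂ) ^ 2) = g₂ := by
    rw [hg₂]; push_cast; ring
  refine ⟨![![0, 0], ![c₁.arg, c₂.arg]],
    H 0 0 * g₁ * (ρ 0 0 : ℝ) + H 0 1 * g₂ * c₁,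
    H 1 0 * g₁ * (ρ 0 1 : ℝ) + H 1 1 * g₂ * c₂, ?_⟩
  ext i j
  fin_cases i <;> fin_cases j <;>
    simp [bussgangGain, Matrix.mul_apply, Fin.sum_univ_two, Matrix.diagonal_apply,
      normSq_amp, Fin.mk_zero, Fin.mk_one] <;>
    rw [hg₁', hg₂']
  · -- (0,0)
    rw [hkey₁]
  · -- (0,1)
    rw [hkey₂, hc₂]; field_simp [hH 0 1]; ring
  · -- (1,0)
    rw [hkey₁, hc₁]; field_simp [hH 1 1]; ring
  · -- (1,1)
    rw [hkey₂]
end
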